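/- Let K be a real symmetric positive semidefinite n×n matrix whose diagonal entries all equal a constant c > 0, and let P, Q be probability vectors in ℝⁿ (nonnegative entries summing to 1). Then the nuclear norm of the matrix diag(√P) K diag(√Q) is at most c. -/

import Mathlib

open Matrix

private lemma dot_self_nonneg' {n : ℕ} (x : Fin n → ℝ) : 0 ≤ x ⬝ᵥ x :=
  Finset.sum_nonneg fun i _ => mul_self_nonneg _

private lemma dot_le_half {n : ℕ} (x y : Fin n → ℝ) :
    x ⬝ᵥ y ≤ (x ⬝ᵥ x + y ⬝ᵥ y) / 2 := by
  have h := dot_self_nonneg' (x - y)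
  have hexp : (x - y) ⬝ᵥ (x - y) = x ⬝ᵥ x - 2 * (x ⬝ᵥ y) + y ⬝ᵥ y := by
    simp only [sub_dotProduct, dotProduct_sub]
    rw [dotProduct_comm y x]
    ring
  linarith [hexp ▸ h]

private lemma psd_trace_nonneg {n : ℕ} {M : Matrix (Fin n) (Fin n) ℝ} (h : M.PosSemidef) :
    0 ≤ M.trace := by
  rw [Matrix.trace]
  refine Finset.sum_nonneg fun i _ => ?_
  have := h.dotProduct_mulVec_nonneg (Pi.single i 1)
  simpa [dotProduct, Matrix.mulVec, Pi.single_apply, Finset.mul_sum,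
    Finset.sum_ite_eq, Finset.sum_ite_eq'] using this

private lemma trace_mul_psd_nonneg {n : ℕ} {X Y : Matrix (Fin n) (Fin n) ℝ}
    (hX : X.PosSemidef) (hY : Y.PosSemidef) : 0 ≤ (X * Y).trace := by
  obtain ⟨C, hC⟩ : ∃ C : Matrix (Fin n) (Fin n) ℝ, X = Cᴴ * C := by
    open scoped MatrixOrder in exact CStarAlgebra.nonneg_iff_eq_star_mul_self.mp hX.nonneg
  have h1 : (X * Y).trace = (C * Y * Cᴴ).trace := by
    rw [hC, Matrix.mul_assoc, Matrix.trace_mul_comm]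
  rw [h1]
  exact psd_trace_nonneg (hY.mul_mul_conjTranspose_same C)

private lemma sum_dot_mulVec_eq_trace {n : ℕ} (v : Fin n → (Fin n → ℝ))
    (G : Matrix (Fin n) (Fin n) ℝ) :
    ∑ i, v i ⬝ᵥ (G *ᵥ v i) =
      ((Matrix.of fun x i => v i x)ᴴ * G * (Matrix.of fun x i => v i x)).trace := by
  rw [Matrix.trace]
  refine Finset.sum_congr rfl fun i _ => ?_
  simp only [Matrix.diag_apply, Matrix.mul_apply, Matrix.conjTranspose_apply, Matrix.of_apply,
    dotProduct, Matrix.mulVec, dotProduct, star_trivial, Finset.sum_mul,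
    Finset.mul_sum]
  rw [Finset.sum_comm]
  exact Finset.sum_congr rfl fun x _ => Finset.sum_congr rfl fun y _ => by ring

private lemma sum_dot_le_trace {n : ℕ} (u : Fin n → (Fin n → ℝ)) (d : Fin n → ℝ)
    (hd : ∀ i, d i = 0 ∨ d i = 1) (h0 : ∀ i, d i = 0 → u i = 0)
    (huu : ∀ i j, u i ⬝ᵥ u j = if i = j then d i else 0)
    {G : Matrix (Fin n) (Fin n) ℝ} (hG : G.PosSemidef) :
    ∑ i, u i ⬝ᵥ (G *ᵥ u i) ≤ G.trace := by
  classical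
  set U : Matrix (Fin n) (Fin n) ℝ := Matrix.of fun x i => u i x with hUdef
  rw [sum_dot_mulVec_eq_trace]
  have hUU : Uᴴ * U = Matrix.diagonal d := by
    ext i j
    have h := huu i j
    simp only [dotProduct] at h
    simp only [Matrix.mul_apply, Matrix.conjTranspose_apply, Matrix.of_apply, star_trivial,
      Matrix.diagonal_apply, hUdef]
    exact h
  have hUd : U * Matrix.diagonal d = U := by
    ext x j
    rw [Matrix.mul_diagonal]
    rcases hd j with h | h
    · rw [h, mul_zero]
      have := h0 j h
      simp [hUdef, this]
    · rw [h, mul_one]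
  have hPidem : (U * Uᴴ) * (U * Uᴴ) = U * Uᴴ := by
    calc (U * Uᴴ) * (U * Uᴴ) = U * (Uᴴ * U) * Uᴴ := by
          simp only [Matrix.mul_assoc]
      _ = U * Uᴴ := by rw [hUU, hUd]
  have hherm : (1 - U * Uᴴ)ᴴ = 1 - U * Uᴴ := by
    simp [Matrix.conjTranspose_sub, Matrix.conjTranspose_mul]
  have hproj : (1 - U * Uᴴ).PosSemidef := by
    have key : (1 - U * Uᴴ)ᴴ * (1 - U * Uᴴ) = 1 - U * Uᴴ := by
      rw [hherm]
      simp only [Matrix.mul_sub, Matrix.sub_mul, Matrix.mul_one, Matrix.one_mul, hPidem]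
      abel
    rw [← key]
    exact Matrix.posSemidef_conjTranspose_mul_self _
  have h2 : (Uᴴ * G * U).trace = (G * (U * Uᴴ)).trace := by
    rw [Matrix.trace_mul_cycle, ← Matrix.mul_assoc, Matrix.trace_mul_comm, Matrix.mul_assoc]
  have h3 : 0 ≤ (G * (1 - U * Uᴴ)).trace := trace_mul_psd_nonneg hG hproj
  have h4 : (G * (1 - U * Uᴴ)).trace = G.trace - (G * (U * Uᴴ)).trace := by
    rw [Matrix.mul_sub, Matrix.mul_one, Matrix.trace_sub]
  rw [h2]
  rw [h4] at h3
  linarith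

/-- The nuclear norm of a real matrix: the sum of its singular values, i.e. the
sum of the square roots of the eigenvalues of `Mᵀ M` (`Mᴴ = Mᵀ` over `ℝ`). -/
noncomputable def nuclearNorm {m n : Type*} [Fintype m] [Fintype n] [DecidableEq n]
    (M : Matrix m n ℝ) : ℝ :=
  ∑ i, Real.sqrt ((Matrix.isHermitian_conjTranspose_mul_self M).eigenvalues i)

/-- If `K` is PSD with constant diagonal `c > 0` and `P, Q` are probability
vectors, then `‖diag(√P) K diag(√Q)‖_* ≤ c`. -/
theorem nuclearNorm_diag_kernel_le (n : ℕ) (K : Matrix (Fin n) (Fin n) ℝ)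
    (hK : K.PosSemidef) (c : ℝ) (hc : 0 < c) (hdiag : ∀ i, K i i = c)
    (P Q : Fin n → ℝ) (hP : ∀ i, 0 ≤ P i) (hQ : ∀ i, 0 ≤ Q i)
    (hPsum : ∑ i, P i = 1) (hQsum : ∑ i, Q i = 1) :
    nuclearNorm (Matrix.diagonal (fun i => Real.sqrt (P i)) * K *
      Matrix.diagonal (fun i => Real.sqrt (Q i))) ≤ c := by
  classical
  obtain ⟨L, hL⟩ : ∃ L : Matrix (Fin n) (Fin n) ℝ, K = Lᴴ * L := by
    open scoped MatrixOrder in exact CStarAlgebra.nonneg_iff_eq_star_mul_self.mp hK.nonneg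
  set DP := Matrix.diagonal (fun i => Real.sqrt (P i)) with hDPdef
  set DQ := Matrix.diagonal (fun i => Real.sqrt (Q i)) with hDQdef
  set M := DP * K * DQ with hMdef
  set A := L * DP with hAdef
  set B := L * DQ with hBdef
  have hDPh : DPᴴ = DP := by
    simp [hDPdef, Matrix.diagonal_conjTranspose]
  have hDQh : DQᴴ = DQ := by
    simp [hDQdef, Matrix.diagonal_conjTranspose]
  have hAB : Aᴴ * B = M := by
    rw [hAdef, hBdef, Matrix.conjTranspose_mul, hDPh, hMdef, hL]
    simp only [Matrix.mul_assoc]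
  -- diagonal trace computations
  have htrD : ∀ (R : Fin n → ℝ), (∀ i, 0 ≤ R i) → (∑ i, R i = 1) →
      (Matrix.diagonal (fun i => Real.sqrt (R i)) * K *
        Matrix.diagonal (fun i => Real.sqrt (R i))).trace = c := by
    intro R hR hRs
    rw [Matrix.trace]
    have hdiagv : ∀ i, (Matrix.diagonal (fun i => Real.sqrt (R i)) * K *
        Matrix.diagonal (fun i => Real.sqrt (R i))).diag i = R i * c := by
      intro i
      rw [Matrix.diag_apply, Matrix.mul_diagonal, Matrix.diagonal_mul, hdiag i,
        mul_right_comm, Real.mul_self_sqrt (hR i)]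
    rw [Finset.sum_congr rfl fun i _ => hdiagv i, ← Finset.sum_mul, hRs, one_mul]
  have htrA : (Aᴴ * A).trace = c := by
    have hform : Aᴴ * A = DP * K * DP := by
      rw [hAdef, Matrix.conjTranspose_mul, hDPh, hL]
      simp only [Matrix.mul_assoc]
    rw [hform, hDPdef]
    exact htrD P hP hPsum
  have htrB : (Bᴴ * B).trace = c := by
    have hform : Bᴴ * B = DQ * K * DQ := by
      rw [hBdef, Matrix.conjTranspose_mul, hDQh, hL]
      simp only [Matrix.mul_assoc]
    rw [hform, hDQdef]
    exact htrD Q hQ hQsum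
  -- spectral data
  have hN := Matrix.isHermitian_conjTranspose_mul_self M
  have hlam : ∀ i, 0 ≤ hN.eigenvalues i := fun i =>
    Matrix.eigenvalues_conjTranspose_mul_self_nonneg M i
  set v : Fin n → (Fin n → ℝ) := fun i => ⇑(hN.eigenvectorBasis i) with hvdef
  have hvv : ∀ i j, v i ⬝ᵥ v j = if i = j then 1 else 0 := by
    intro i j
    have h := orthonormal_iff_ite.mp hN.eigenvectorBasis.orthonormal i j
    simpa [PiLp.inner_apply, dotProduct, mul_comm, -Matrix.conjTranspose_eq_transpose_of_trivial] using h
  have hmv : ∀ i, (Mᴴ * M) *ᵥ v i = hN.eigenvalues i • v i := fun i =>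
    hN.mulVec_eigenvectorBasis i
  have hadj : ∀ (C : Matrix (Fin n) (Fin n) ℝ) (a b : Fin n → ℝ),
      a ⬝ᵥ (Cᴴ *ᵥ b) = (C *ᵥ a) ⬝ᵥ b := by
    intro C a b
    rw [Matrix.dotProduct_mulVec, Matrix.vecMul_conjTranspose]
    simp
  have hww : ∀ i j, (M *ᵥ v i) ⬝ᵥ (M *ᵥ v j) =
      hN.eigenvalues j * (if i = j then 1 else 0) := by
    intro i j
    rw [← hadj M (v i) (M *ᵥ v j), Matrix.mulVec_mulVec, hmv j,
      dotProduct_smul, hvv i j, smul_eq_mul]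
  set u : Fin n → (Fin n → ℝ) :=
    fun i => (Real.sqrt (hN.eigenvalues i))⁻¹ • (M *ᵥ v i) with hudef
  have hu0 : ∀ i, hN.eigenvalues i = 0 → u i = 0 := by
    intro i h0
    have hz : (M *ᵥ v i) ⬝ᵥ (M *ᵥ v i) = 0 := by rw [hww]; simp [h0, -Matrix.conjTranspose_eq_transpose_of_trivial]
    have := dotProduct_self_eq_zero.mp hz
    rw [hudef]
    simp [this]
  set d : Fin n → ℝ := fun i => if hN.eigenvalues i = 0 then 0 else 1 with hddef
  have huu : ∀ i j, u i ⬝ᵥ u j = if i = j then d i else 0 := by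
    intro i j
    rcases eq_or_ne i j with rfl | hij
    · rw [hddef]
      by_cases h0 : hN.eigenvalues i = 0
      · simp [hu0 i h0, h0, -Matrix.conjTranspose_eq_transpose_of_trivial]
      · have hpos : 0 < hN.eigenvalues i := lt_of_le_of_ne (hlam i) (Ne.symm h0)
        have hs : Real.sqrt (hN.eigenvalues i) ≠ 0 := by positivity
        rw [hudef]
        simp only [smul_dotProduct, dotProduct_smul, smul_eq_mul]
        rw [hww i i]
        simp only [if_pos rfl, h0, if_neg, mul_one, if_true]
        rw [← Real.mul_self_sqrt (hlam i)]
        field_simp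
        simp [Real.sqrt_sq (Real.sqrt_nonneg _)]
    · rw [hudef]
      simp only [smul_dotProduct, dotProduct_smul, smul_eq_mul]
      rw [hww i j, if_neg hij, if_neg hij]
      ring
  have hd : ∀ i, d i = 0 ∨ d i = 1 := by
    intro i; rw [hddef]; by_cases h : hN.eigenvalues i = 0 <;> simp [h, -Matrix.conjTranspose_eq_transpose_of_trivial]
  have hd0 : ∀ i, d i = 0 → u i = 0 := by
    intro i h
    rw [hddef] at h
    by_cases h0 : hN.eigenvalues i = 0
    · exact hu0 i h0
    · simp [h0, -Matrix.conjTranspose_eq_transpose_of_trivial] at h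
  -- pointwise singular value bound
  have hsig : ∀ i, Real.sqrt (hN.eigenvalues i) ≤
      ((A *ᵥ u i) ⬝ᵥ (A *ᵥ u i) + (B *ᵥ v i) ⬝ᵥ (B *ᵥ v i)) / 2 := by
    intro i
    by_cases h0 : hN.eigenvalues i = 0
    · rw [h0, Real.sqrt_zero]
      have := dot_self_nonneg' (A *ᵥ u i)
      have := dot_self_nonneg' (B *ᵥ v i)
      linarith
    · have hpos : 0 < hN.eigenvalues i := lt_of_le_of_ne (hlam i) (Ne.symm h0)
      have hs : Real.sqrt (hN.eigenvalues i) ≠ 0 := by positivity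
      have key : (A *ᵥ u i) ⬝ᵥ (B *ᵥ v i) = Real.sqrt (hN.eigenvalues i) := by
        rw [← hadj A (u i) (B *ᵥ v i), Matrix.mulVec_mulVec, hAB, hudef]
        simp only [smul_dotProduct, smul_eq_mul]
        rw [hww i i, if_pos rfl, mul_one]
        rw [← Real.mul_self_sqrt (hlam i)]
        field_simp
        simp [Real.sqrt_sq (Real.sqrt_nonneg _)]
      calc Real.sqrt (hN.eigenvalues i) = (A *ᵥ u i) ⬝ᵥ (B *ᵥ v i) := key.symm
        _ ≤ ((A *ᵥ u i) ⬝ᵥ (A *ᵥ u i) + (B *ᵥ v i) ⬝ᵥ (B *ᵥ v i)) / 2 :=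
            dot_le_half _ _
  -- sum bounds
  have hub : ∑ i, (A *ᵥ u i) ⬝ᵥ (A *ᵥ u i) ≤ c := by
    have heq : ∀ i, (A *ᵥ u i) ⬝ᵥ (A *ᵥ u i) = u i ⬝ᵥ ((Aᴴ * A) *ᵥ u i) := by
      intro i
      rw [← Matrix.mulVec_mulVec (u i) Aᴴ A, hadj A (u i)]
    calc ∑ i, (A *ᵥ u i) ⬝ᵥ (A *ᵥ u i) = ∑ i, u i ⬝ᵥ ((Aᴴ * A) *ᵥ u i) := by
          exact Finset.sum_congr rfl fun i _ => heq i
      _ ≤ (Aᴴ * A).trace :=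
          sum_dot_le_trace u d hd hd0 huu (Matrix.posSemidef_conjTranspose_mul_self A)
      _ = c := htrA
  have hvb : ∑ i, (B *ᵥ v i) ⬝ᵥ (B *ᵥ v i) ≤ c := by
    have heq : ∀ i, (B *ᵥ v i) ⬝ᵥ (B *ᵥ v i) = v i ⬝ᵥ ((Bᴴ * B) *ᵥ v i) := by
      intro i
      rw [← Matrix.mulVec_mulVec (v i) Bᴴ B, hadj B (v i)]
    calc ∑ i, (B *ᵥ v i) ⬝ᵥ (B *ᵥ v i) = ∑ i, v i ⬝ᵥ ((Bᴴ * B) *ᵥ v i) := by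
          exact Finset.sum_congr rfl fun i _ => heq i
      _ ≤ (Bᴴ * B).trace :=
          sum_dot_le_trace v (fun _ => 1) (fun _ => Or.inr rfl)
            (fun i h => absurd h one_ne_zero)
            (fun i j => by rw [hvv i j])
            (Matrix.posSemidef_conjTranspose_mul_self B)
      _ = c := htrB
  -- conclude
  show ∑ i, Real.sqrt ((Matrix.isHermitian_conjTranspose_mul_self M).eigenvalues i) ≤ c
  calc ∑ i, Real.sqrt (hN.eigenvalues i)
      ≤ ∑ i, ((A *ᵥ u i) ⬝ᵥ (A *ᵥ u i) + (B *ᵥ v i) ⬝ᵥ (B *ᵥ v i)) / 2 :=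
        Finset.sum_le_sum fun i _ => hsig i
    _ = (∑ i, (A *ᵥ u i) ⬝ᵥ (A *ᵥ u i) + ∑ i, (B *ᵥ v i) ⬝ᵥ (B *ᵥ v i)) / 2 := by
        rw [← Finset.sum_div, Finset.sum_add_distrib]
    _ ≤ (c + c) / 2 := by linarith
    _ = c := by ring
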